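/- Let k ≥ 1, m ≥ 2, and let N₁, N₂ be natural numbers. Suppose: (i) every finite simple graph with at most N₁ vertices, all of whose odd cycles have length at least 2k+1, admits a proper coloring in m−1 colors; and (ii) every finite simple graph all of whose odd cycles have length at least 2k+1 that admits no proper coloring in m colors contains a vertex x whose metric ball B(x, k−1) has at least N₂ vertices. Then every finite simple graph with at most N₁ + N₂ vertices, all of whose odd cycles have length at least 2k+1, admits a proper coloring in m colors. -/

import Mathlib

open SimpleGraph Walk

section Aux
variable {V : Type} {G : SimpleGraph V}

/-- Split a closed walk with a duplicated interior vertex into two positive-length closed walks. -/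
lemma split_closed_walk {v : V} (w : G.Walk v v)
    (hdup : ¬ w.support.tail.Nodup) :
    ∃ (u : V) (c₁ c₂ : G.Walk u u), c₁.length + c₂.length = w.length ∧
      0 < c₁.length ∧ 0 < c₂.length := by
  classical
  obtain ⟨y, hy⟩ : ∃ y, 2 ≤ w.support.tail.count y := by
    by_contra hcon
    push_neg at hcon
    exact hdup (List.nodup_iff_count_le_one.mpr fun a => by have := hcon a; omega)
  have hy_mem : y ∈ w.support := by
    apply List.mem_of_mem_tail
    exact List.count_pos_iff.mp (by omega)
  have hlenr : (w.rotate y hy_mem).length = w.length := by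
    have h1 := congrArg Walk.length (w.take_spec hy_mem)
    rw [length_append] at h1
    simp only [Walk.rotate, length_append]
    omega
  have hcount : 2 ≤ (w.rotate y hy_mem).support.tail.count y := by
    have := ((w.support_rotate y hy_mem).perm.count_eq y)
    omega
  have key : ∀ (c : G.Walk y y), 2 ≤ c.support.tail.count y →
      ∃ (u : V) (c₁ c₂ : G.Walk u u), c₁.length + c₂.length = c.length ∧
        0 < c₁.length ∧ 0 < c₂.length := by
    intro c hc
    cases c with
    | nil => simp at hc
    | @cons _ z _ h r =>
      rw [support_cons, List.tail_cons] at hc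
      have hyr : y ∈ r.support := List.count_pos_iff.mp (by omega)
      refine ⟨y, Walk.cons h (r.takeUntil y hyr), r.dropUntil y hyr, ?_, by simp, ?_⟩
      · have h1 := congrArg Walk.length (r.take_spec hyr)
        rw [length_append] at h1
        simp only [length_cons]
        omega
      · by_contra h0
        push_neg at h0
        have h00 : (r.dropUntil y hyr).length = 0 := by omega
        have hnil : (r.dropUntil y hyr) = Walk.nil := Walk.nil_iff_eq_nil.mp (Walk.length_eq_zero_iff.mp h00)
        have hsupp := congrArg Walk.support (r.take_spec hyr)
        rw [support_append, hnil] at hsupp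
        have : r.support.count y = (r.takeUntil y hyr).support.count y := by
          rw [← hsupp]; simp
        rw [count_support_takeUntil_eq_one] at this
        omega
  obtain ⟨u, c₁, c₂, hsum, h₁, h₂⟩ := key (w.rotate y hy_mem) hcount
  exact ⟨u, c₁, c₂, by omega, h₁, h₂⟩

/-- Any closed walk of odd length contains an odd cycle of at most its length. -/
lemma odd_closed_walk_exists_cycle :
    ∀ (n : ℕ) {v : V} (w : G.Walk v v), w.length ≤ n → Odd w.length →
    ∃ (u : V) (c : G.Walk u u), c.IsCycle ∧ Odd c.length ∧ c.length ≤ w.length := by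
  classical
  intro n
  induction n using Nat.strong_induction_on with
  | _ n ih =>
    intro v w hn hodd
    by_cases hnd : w.support.tail.Nodup
    · cases w with
      | nil => simp [Nat.odd_iff] at hodd
      | @cons _ z _ h r =>
        rw [support_cons, List.tail_cons] at hnd
        have hr : r.IsPath := IsPath.mk' hnd
        have hedge : s(v, z) ∉ r.edges := by
          intro hmem
          cases r with
          | nil => simp at hmem
          | @cons _ z₂ _ h₂ r₂ =>
            rw [edges_cons, List.mem_cons] at hmem
            rcases hmem with heq | hmem
            · rw [Sym2.eq_iff] at heq
              rcases heq with ⟨h1, h2⟩ | ⟨h1, h2⟩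
              · exact (G.ne_of_adj h) h1
              · -- v = z₂ : then r₂ is a closed path, hence nil, so w has length 2
                have hp2 : r₂.IsPath := hr.of_cons
                subst h1
                have : r₂ = Walk.nil := (isPath_iff_eq_nil (p := r₂)).mp hp2
                subst this
                simp [Nat.odd_iff] at hodd
            · have hz : z ∈ r₂.support := Walk.snd_mem_support_of_mem_edges r₂ hmem
              have : z ∉ r₂.support := by
                have := hr.support_nodup
                rw [support_cons] at this
                exact (List.nodup_cons.mp this).1
              exact this hz
        exact ⟨v, Walk.cons h r, (cons_isCycle_iff r h).mpr ⟨hr, hedge⟩, hodd, le_rfl⟩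
    · obtain ⟨u, c₁, c₂, hsum, h₁, h₂⟩ := split_closed_walk w hnd
      have hor : Odd c₁.length ∨ Odd c₂.length := by
        rw [Nat.odd_iff] at hodd ⊢
        rw [Nat.odd_iff]
        omega
      rcases hor with ho | ho
      · obtain ⟨u', c, hc, hco, hcl⟩ := ih c₁.length (by omega) c₁ le_rfl ho
        exact ⟨u', c, hc, hco, by omega⟩
      · obtain ⟨u', c, hc, hco, hcl⟩ := ih c₂.length (by omega) c₂ le_rfl ho
        exact ⟨u', c, hc, hco, by omega⟩

end Aux


/-- **Lemma (rephrased Lemma 2 of Berlov–Bogdanov): `f(m,k) ≥ f(m-1,k) + d(m,k-1)`.**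
If (i) every finite simple graph with at most `N₁` vertices and all odd cycles of length at
least `2k+1` is `(m-1)`-colorable, and (ii) every such graph that is not `m`-colorable has a
metric ball of radius `k-1` with at least `N₂` vertices, then every finite simple graph with
at most `N₁ + N₂` vertices and all odd cycles of length at least `2k+1` is `m`-colorable. -/
theorem bb_lemma2 (k m N₁ N₂ : ℕ) (hk : 1 ≤ k) (hm : 2 ≤ m)
    (h1 : ∀ (V : Type) [Fintype V] (X : SimpleGraph V),
      Fintype.card V ≤ N₁ →
      (∀ (v : V) (w : X.Walk v v), w.IsCycle → Odd w.length → 2 * k + 1 ≤ w.length) →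
      X.Colorable (m - 1))
    (h2 : ∀ (V : Type) [Fintype V] (X : SimpleGraph V),
      (∀ (v : V) (w : X.Walk v v), w.IsCycle → Odd w.length → 2 * k + 1 ≤ w.length) →
      ¬ X.Colorable m →
      ∃ x : V, N₂ ≤ ({y : V | ∃ w : X.Walk x y, w.length ≤ k - 1} : Set V).ncard) :
    ∀ (V : Type) [Fintype V] (X : SimpleGraph V),
      Fintype.card V ≤ N₁ + N₂ →
      (∀ (v : V) (w : X.Walk v v), w.IsCycle → Odd w.length → 2 * k + 1 ≤ w.length) →
      X.Colorable m := by
  intro V _ X hcard hX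
  by_contra hnc
  obtain ⟨x, hx⟩ := h2 V X hX hnc
  classical
  set S : Set V := {y : V | ∃ w : X.Walk x y, w.length ≤ k - 1} with hSdef
  have hmemS : ∀ a ∈ S, X.Reachable x a ∧ X.dist x a ≤ k - 1 := by
    rintro a ⟨w, hw⟩
    exact ⟨⟨w⟩, le_trans (SimpleGraph.dist_le w) hw⟩
  have hparity : ∀ a b : V, X.Adj a b → a ∈ S → b ∈ S →
      X.dist x a % 2 ≠ X.dist x b % 2 := by
    intro a b hab ha hb hpar
    obtain ⟨hra, hda⟩ := hmemS a ha
    obtain ⟨hrb, hdb⟩ := hmemS b hb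
    obtain ⟨P, hP⟩ := hra.exists_walk_length_eq_dist
    obtain ⟨Q, hQ⟩ := hrb.exists_walk_length_eq_dist
    set W : X.Walk x x := P.append (Walk.cons hab Q.reverse) with hWdef
    have hlen : W.length = X.dist x a + 1 + X.dist x b := by
      simp only [hWdef, Walk.length_append, Walk.length_cons, Walk.length_reverse, hP, hQ]
      omega
    have hoddW : Odd W.length := by rw [Nat.odd_iff, hlen]; omega
    obtain ⟨u, c, hc, hco, hcl⟩ := odd_closed_walk_exists_cycle W.length W le_rfl hoddW
    have := hX u c hc hco
    omega
  have hboundary : ∀ a b : V, X.Adj a b → a ∈ S → b ∉ S →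
      X.dist x a % 2 = (k-1) % 2 := by
    intro a b hab ha hb
    by_contra hpar
    obtain ⟨hra, hda⟩ := hmemS a ha
    obtain ⟨P, hP⟩ := hra.exists_walk_length_eq_dist
    exact hb ⟨P.concat hab, by rw [Walk.length_concat]; omega⟩
  haveI : Fintype ↥(Sᶜ) := Fintype.ofFinite _
  have hcard2 : Fintype.card ↥(Sᶜ) ≤ N₁ := by
    have hc1 : S.ncard + Sᶜ.ncard = Nat.card V := Set.ncard_add_ncard_compl S
    have hc2 : Nat.card V = Fintype.card V := Nat.card_eq_fintype_card
    have hc3 : Fintype.card ↥(Sᶜ) = (Sᶜ).ncard := by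
      rw [← Nat.card_coe_set_eq, Nat.card_eq_fintype_card]
    omega
  have hXc : ∀ (v : ↥(Sᶜ)) (w : (X.induce Sᶜ).Walk v v), w.IsCycle → Odd w.length →
      2 * k + 1 ≤ w.length := by
    intro v w hcyc hodd
    let f := (SimpleGraph.Embedding.induce (Sᶜ : Set V) (G := X)).toHom
    have hinj : Function.Injective f := Subtype.val_injective
    have hc2 := hcyc.map (f := f) hinj
    have := hX (f v) (w.map f) hc2 (by rwa [Walk.length_map])
    rwa [Walk.length_map] at this
  obtain ⟨C⟩ := h1 ↥(Sᶜ) (X.induce Sᶜ) hcard2 hXc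
  apply hnc
  refine ⟨SimpleGraph.Coloring.mk (fun v => if h : v ∈ S then
      (if X.dist x v % 2 = (k-1) % 2 then (⟨m-1, by omega⟩ : Fin m) else ⟨0, by omega⟩)
      else Fin.castLE (by omega) (C ⟨v, h⟩)) ?_⟩
  intro a b hab
  by_cases ha : a ∈ S <;> by_cases hb : b ∈ S
  · have hp := hparity a b hab ha hb
    rw [dif_pos ha, dif_pos hb]
    by_cases h1a : X.dist x a % 2 = (k-1) % 2
    · rw [if_pos h1a, if_neg (by omega)]
      intro hcontra
      have := congrArg Fin.val hcontra
      simp only at this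
      omega
    · rw [if_neg h1a, if_pos (by omega)]
      intro hcontra
      have := congrArg Fin.val hcontra
      simp only at this
      omega
  · have hp := hboundary a b hab ha hb
    rw [dif_pos ha, dif_neg hb, if_pos hp]
    intro hcontra
    have hval := congrArg Fin.val hcontra
    simp only [Fin.coe_castLE] at hval
    have := (C ⟨b, hb⟩).isLt
    omega
  · have hp := hboundary b a hab.symm hb ha
    rw [dif_neg ha, dif_pos hb, if_pos hp]
    intro hcontra
    have hval := congrArg Fin.val hcontra
    simp only [Fin.coe_castLE] at hval
    have := (C ⟨a, ha⟩).isLt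
    omega
  · have hadj : (X.induce Sᶜ).Adj ⟨a, ha⟩ ⟨b, hb⟩ := by
      simpa using hab
    have hCC := C.valid hadj
    rw [dif_neg ha, dif_neg hb]
    intro hcontra
    exact hCC (Fin.castLE_injective _ hcontra)
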